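/- If there exists k ∈ [n] with ‖μ_k − μ_{i_max}‖ ≥ μ_max/2, where i_max = argmax_i ‖μ_i‖ and μ_max = ‖μ_{i_max}‖, then Σ_{i,j∈[n]} π_i π_j ‖μ_i − μ_j‖² ≥ (π_min/8) μ_max², where π_min = min_i π_i. -/

import Mathlib

open MeasureTheory ProbabilityTheory Real Finset
open scoped RealInnerProductSpace BigOperators ENNReal NNReal

noncomputable def stdGaussian (d : ℕ) : Measure (EuclideanSpace ℝ (Fin d)) :=
  (Measure.pi fun _ : Fin d => gaussianReal 0 1).map ⇑(EuclideanSpace.equiv (Fin d) ℝ).symm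

noncomputable def gmmPsi {d n : ℕ} (w : Fin n → ℝ) (μ : Fin n → EuclideanSpace ℝ (Fin d))
    (i : Fin n) (x : EuclideanSpace ℝ (Fin d)) : ℝ :=
  w i * Real.exp (-‖x - μ i‖ ^ 2 / 2) / ∑ k, w k * Real.exp (-‖x - μ k‖ ^ 2 / 2)

noncomputable def psiTilde {d n : ℕ} (w : Fin n → ℝ) (μ : Fin n → EuclideanSpace ℝ (Fin d))
    (x : EuclideanSpace ℝ (Fin d)) : EuclideanSpace ℝ (Fin d) :=
  ∑ i, gmmPsi w μ i x • μ i

noncomputable def gmmPdf {d n : ℕ} (w : Fin n → ℝ) (μ : Fin n → EuclideanSpace ℝ (Fin d))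
    (x : EuclideanSpace ℝ (Fin d)) : ℝ :=
  ∑ i, w i * ((2 * Real.pi) ^ (-(d : ℝ) / 2) * Real.exp (-‖x - μ i‖ ^ 2 / 2))

noncomputable def gmmLoss {d n : ℕ} (w : Fin n → ℝ) (μ : Fin n → EuclideanSpace ℝ (Fin d)) : ℝ :=
  -∫ x, Real.log (gmmPdf w μ x / ((2 * Real.pi) ^ (-(d : ℝ) / 2) * Real.exp (-‖x‖ ^ 2 / 2)))
      ∂ stdGaussian d

noncomputable def gmmGrad {d n : ℕ} (w : Fin n → ℝ) (μ : Fin n → EuclideanSpace ℝ (Fin d))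
    (i : Fin n) : EuclideanSpace ℝ (Fin d) :=
  ∫ x, gmmPsi w μ i x • psiTilde w μ x ∂ stdGaussian d

/-- If some `μ_k` is `μ_max/2`-far from the longest mean, then the weighted pairwise distances
are bounded below by `(π_min/8) μ_max²`. -/
theorem separated_mu_lower_bound {d n : ℕ} (hn : 0 < n)
    (μ : Fin n → EuclideanSpace ℝ (Fin d)) (w : Fin n → ℝ)
    (hw : ∀ i, 0 < w i) (hsum : ∑ i, w i = 1)
    (imax : Fin n) (himax : ∀ i, ‖μ i‖ ≤ ‖μ imax‖)
    (k : Fin n) (hk : ‖μ imax‖ / 2 ≤ ‖μ k - μ imax‖) :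
    (Finset.univ.inf' ⟨⟨0, hn⟩, Finset.mem_univ _⟩ w) / 8 * ‖μ imax‖ ^ 2
      ≤ ∑ i, ∑ j, w i * w j * ‖μ i - μ j‖ ^ 2 := by
  set m := Finset.univ.inf' ⟨⟨0, hn⟩, Finset.mem_univ _⟩ w with hm
  have hm_le : ∀ j, m ≤ w j := fun j => Finset.inf'_le _ (Finset.mem_univ j)
  have hm0 : 0 < m := by
    obtain ⟨j, _, hj⟩ := Finset.exists_mem_eq_inf'
      (⟨⟨0, hn⟩, Finset.mem_univ _⟩ : (Finset.univ : Finset (Fin n)).Nonempty) w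
    have hj' : m = w j := hj
    rw [hj']; exact hw j
  by_cases hkm : k = imax
  · have h0 : ‖μ imax‖ = 0 := by
      subst hkm
      have h1 : ‖μ k - μ k‖ = (0:ℝ) := by simp
      nlinarith [norm_nonneg (μ k)]
    have hnn : (0:ℝ) ≤ ∑ i, ∑ j, w i * w j * ‖μ i - μ j‖ ^ 2 := by
      apply Finset.sum_nonneg; intro i _
      apply Finset.sum_nonneg; intro j _
      exact mul_nonneg (mul_nonneg (hw i).le (hw j).le) (by positivity)
    rw [h0]
    simpa using hnn
  · have key : ∀ i, m / 8 * ‖μ imax‖ ^ 2 ≤ ∑ j, w j * ‖μ i - μ j‖ ^ 2 := by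
      intro i
      have htri : ‖μ k - μ imax‖ ≤ ‖μ i - μ k‖ + ‖μ i - μ imax‖ := by
        have h := norm_sub_le_norm_sub_add_norm_sub (μ k) (μ i) (μ imax)
        rwa [norm_sub_rev (μ k) (μ i)] at h
      have hpair : w k * ‖μ i - μ k‖ ^ 2 + w imax * ‖μ i - μ imax‖ ^ 2
          ≤ ∑ j, w j * ‖μ i - μ j‖ ^ 2 := by
        have hp : ∑ j ∈ ({k, imax} : Finset (Fin n)), w j * ‖μ i - μ j‖ ^ 2
            = w k * ‖μ i - μ k‖ ^ 2 + w imax * ‖μ i - μ imax‖ ^ 2 :=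
          Finset.sum_pair hkm
        rw [← hp]
        apply Finset.sum_le_sum_of_subset_of_nonneg (Finset.subset_univ _)
        intro j _ _
        exact mul_nonneg (hw j).le (by positivity)
      have hab : ‖μ imax‖ / 2 ≤ ‖μ i - μ k‖ + ‖μ i - μ imax‖ := le_trans hk htri
      have hsq : ‖μ imax‖ ^ 2 / 4 ≤ (‖μ i - μ k‖ + ‖μ i - μ imax‖) ^ 2 := by
        nlinarith [norm_nonneg (μ imax)]
      nlinarith [hpair, mul_le_mul_of_nonneg_left hsq hm0.le,
        mul_nonneg hm0.le (sq_nonneg (‖μ i - μ k‖ - ‖μ i - μ imax‖)),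
        mul_nonneg (sub_nonneg.2 (hm_le k)) (sq_nonneg ‖μ i - μ k‖),
        mul_nonneg (sub_nonneg.2 (hm_le imax)) (sq_nonneg ‖μ i - μ imax‖)]
    calc m / 8 * ‖μ imax‖ ^ 2 = ∑ i, w i * (m / 8 * ‖μ imax‖ ^ 2) := by
          rw [← Finset.sum_mul, hsum, one_mul]
      _ ≤ ∑ i, w i * ∑ j, w j * ‖μ i - μ j‖ ^ 2 :=
          Finset.sum_le_sum fun i _ => mul_le_mul_of_nonneg_left (key i) (hw i).le
      _ = ∑ i, ∑ j, w i * w j * ‖μ i - μ j‖ ^ 2 := by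
          simp [Finset.mul_sum, mul_assoc]
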